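/- arXiv:2109.06927 — 6 statements merged into one kernel-verified Lean document; each statement's English description precedes it below -/
import Mathlib

section
/- Let p, q > 0 and define μ: ℝ² → ℝ² by μ(s,t) = (-s + q·max(t + p·max(s,0), 0), -t - p·max(s,0)). Define φ(s,t) = g(s,t) if s < 0 and t > 0, and φ(s,t) = f(s,t) otherwise, where f(x,y) = p x² + pq xy + q y² and g(x,y) = p x² - pq xy + q y². Then φ(μ(s,t)) = φ(s,t) for all (s,t) ∈ ℝ². -/
theorem stmt_5 (p q : ℝ) (hp : 0 < p) (hq : 0 < q)
    (μ : ℝ × ℝ → ℝ × ℝ)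
    (hμ : ∀ s t : ℝ, μ (s, t) = (-s + q * max (t + p * max s 0) 0, -t - p * max s 0))
    (f g : ℝ → ℝ → ℝ)
    (hf : ∀ x y, f x y = p * x ^ 2 + p * q * x * y + q * y ^ 2)
    (hg : ∀ x y, g x y = p * x ^ 2 - p * q * x * y + q * y ^ 2)
    (φ : ℝ × ℝ → ℝ)
    (hφ : ∀ s t : ℝ, φ (s, t) = if s < 0 ∧ t > 0 then g s t else f s t) :
    ∀ s t : ℝ, φ (μ (s, t)) = φ (s, t) := by
  intro s t
  rw [hμ s t, hφ, hφ]
  rcases le_or_gt s 0 with hs | hs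
  · rw [max_eq_right hs, mul_zero, add_zero]
    rcases le_or_gt t 0 with ht | ht
    · rw [max_eq_right ht, if_neg (fun h => absurd h.2 (by linarith)),
        if_neg (fun h => absurd h.2 (by linarith)), hf, hf]
      ring
    · rw [max_eq_left ht.le]
      rcases hs.lt_or_eq with hs' | hs'
      · rw [if_neg (fun h => absurd h.2 (by linarith)), if_pos ⟨hs', ht⟩, hf, hg]
        ring
      · rw [if_neg (fun h => absurd h.2 (by linarith)),
          if_neg (fun h => absurd h.1 (by rw [hs']; exact lt_irrefl 0)), hf, hf]
        subst hs'
        ring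
  · rw [max_eq_left hs.le]
    rcases le_or_gt (t + p * s) 0 with htp | htp
    · rw [max_eq_right htp, mul_zero, add_zero]
      rcases htp.lt_or_eq with htp' | htp'
      · rw [if_pos ⟨by linarith, by linarith⟩,
          if_neg (fun h => absurd h.1 (by linarith)), hg, hf]
        ring
      · rw [if_neg (fun h => absurd h.2 (by linarith)),
          if_neg (fun h => absurd h.1 (by linarith)), hf, hf]
        linear_combination (2 * p * q * s) * htp'
    · rw [max_eq_left htp.le,
        if_neg (fun h => absurd h.2 (by linarith)),
        if_neg (fun h => absurd h.1 (by linarith)), hf, hf]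
      ring
end

section
/- Let τ(s,t) = ((pq-1)s + q t, -p s - t), where p, q > 0. For any (s,t) ∈ ℝ², writing (sₙ, tₙ) = τⁿ(s,t), we have sₙ = s·U_{2n}(κ/2) + t·ν⁻¹·U_{2n-1}(κ/2) and tₙ = -s·ν·U_{2n-1}(κ/2) - t·U_{2n-2}(κ/2), where κ = sqrt(pq), ν = sqrt(p/q), and U_n denotes the n-th Chebyshev polynomial of the second kind (with U_{-1} = 0, U_{-2} = -1). -/
open Polynomial Polynomial.Chebyshev

theorem stmt_7 (p q : ℝ) (hp : 0 < p) (hq : 0 < q)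
    (τ : ℝ × ℝ → ℝ × ℝ)
    (hτ : ∀ s t : ℝ, τ (s, t) = ((p * q - 1) * s + q * t, -p * s - t))
    (κ ν : ℝ) (hκ : κ = Real.sqrt (p * q)) (hν : ν = Real.sqrt (p / q))
    (s t : ℝ) (n : ℕ) :
    τ^[n] (s, t) =
      (s * (U ℝ (2 * n)).eval (κ / 2) + t * ν⁻¹ * (U ℝ (2 * n - 1)).eval (κ / 2),
       -s * ν * (U ℝ (2 * n - 1)).eval (κ / 2) - t * (U ℝ (2 * n - 2)).eval (κ / 2)) := by
  have hνpos : 0 < ν := by rw [hν]; positivity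
  have hν0 : ν ≠ 0 := hνpos.ne'
  have hκν : ν * κ = p := by
    rw [hν, hκ, ← Real.sqrt_mul (by positivity)]
    rw [show p / q * (p * q) = p ^ 2 by field_simp]
    exact Real.sqrt_sq hp.le
  have hqν : q * ν = κ := by
    rw [hν, hκ, ← Real.sqrt_sq hq.le, ← Real.sqrt_mul (by positivity)]
    congr 1; field_simp; rw [Real.sq_sqrt (sq_nonneg q)]
  have hpeq : p = ν * κ := hκν.symm
  have hqeq : q = κ / ν := by field_simp; linarith [hqν]
  have hrec : ∀ k : ℤ, (U ℝ (k + 2)).eval (κ / 2) =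
      κ * (U ℝ (k + 1)).eval (κ / 2) - (U ℝ k).eval (κ / 2) := by
    intro k
    simp only [U_add_two, eval_sub, eval_mul, eval_ofNat, eval_X]
    ring
  induction n with
  | zero =>
    simp only [Function.iterate_zero, id_eq, Nat.cast_zero, mul_zero, zero_sub]
    norm_num [U_zero, U_neg_one, U_neg_two]
  | succ n ih =>
    rw [Function.iterate_succ_apply', ih, hτ]
    have hc : (U ℝ (2 * (n : ℤ))).eval (κ / 2) =
        κ * (U ℝ (2 * (n : ℤ) - 1)).eval (κ / 2) - (U ℝ (2 * (n : ℤ) - 2)).eval (κ / 2) := by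
      have h := hrec (2 * (n : ℤ) - 2)
      rwa [show 2 * (n : ℤ) - 2 + 2 = 2 * (n : ℤ) by ring,
        show 2 * (n : ℤ) - 2 + 1 = 2 * (n : ℤ) - 1 by ring] at h
    have hd : (U ℝ (2 * (n : ℤ) + 1)).eval (κ / 2) =
        κ * (U ℝ (2 * (n : ℤ))).eval (κ / 2) - (U ℝ (2 * (n : ℤ) - 1)).eval (κ / 2) := by
      have h := hrec (2 * (n : ℤ) - 1)
      rwa [show 2 * (n : ℤ) - 1 + 2 = 2 * (n : ℤ) + 1 by ring,
        show 2 * (n : ℤ) - 1 + 1 = 2 * (n : ℤ) by ring] at h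
    have he : (U ℝ (2 * (n : ℤ) + 2)).eval (κ / 2) =
        κ * (U ℝ (2 * (n : ℤ) + 1)).eval (κ / 2) - (U ℝ (2 * (n : ℤ))).eval (κ / 2) :=
      hrec (2 * (n : ℤ))
    push_cast
    rw [show 2 * ((n : ℤ) + 1) = 2 * (n : ℤ) + 2 by ring,
      show 2 * (n : ℤ) + 2 - 1 = 2 * (n : ℤ) + 1 by ring,
      show 2 * (n : ℤ) + 2 - 2 = 2 * (n : ℤ) by ring,
      he, hd, hc, hpeq, hqeq]
    simp only [Prod.mk.injEq]
    constructor <;> (field_simp; ring)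
end

section
/- Suppose pq = 4cos²θ with 0 < θ < π/2, p, q > 0. Let τ(s,t) = ((pq-1)s + qt, -ps - t) and (sₙ, tₙ) = τⁿ(s,t). Then sₙ = (s·sin((2n+1)θ) + (t/ν)·sin(2nθ))/sin(θ) and tₙ = (-s·ν·sin(2nθ) - t·sin((2n-1)θ))/sin(θ), where ν = sqrt(p/q). -/
open Real

theorem stmt_8 (p q θ : ℝ) (hp : 0 < p) (hq : 0 < q)
    (hθ₁ : 0 < θ) (hθ₂ : θ < π / 2) (hpq : p * q = 4 * Real.cos θ ^ 2)
    (ν : ℝ) (hν : ν = Real.sqrt (p / q))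
    (τ : ℝ × ℝ → ℝ × ℝ)
    (hτ : ∀ s t : ℝ, τ (s, t) = ((p * q - 1) * s + q * t, -p * s - t))
    (s t : ℝ) (n : ℕ) :
    τ^[n] (s, t) =
      ((s * Real.sin ((2 * n + 1) * θ) + (t / ν) * Real.sin (2 * n * θ)) / Real.sin θ,
       (-s * ν * Real.sin (2 * n * θ) - t * Real.sin ((2 * n - 1) * θ)) / Real.sin θ) := by
  have hsin : 0 < Real.sin θ := Real.sin_pos_of_pos_of_lt_pi hθ₁ (lt_trans hθ₂ (by linarith [Real.pi_pos]))
  have hs0 : Real.sin θ ≠ 0 := ne_of_gt hsin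
  have hcos : 0 < Real.cos θ := Real.cos_pos_of_mem_Ioo ⟨by linarith [Real.pi_pos], hθ₂⟩
  have hν0 : 0 < ν := by
    rw [hν]; exact Real.sqrt_pos.mpr (div_pos hp hq)
  have hνn : ν ≠ 0 := ne_of_gt hν0
  have hν2 : ν ^ 2 = p / q := by
    rw [hν]; exact Real.sq_sqrt (le_of_lt (div_pos hp hq))
  have hqν : q * ν = 2 * Real.cos θ := by
    have h1 : (q * ν) ^ 2 = (2 * Real.cos θ) ^ 2 := by
      have : (q * ν) ^ 2 = q ^ 2 * (p / q) := by rw [mul_pow, hν2]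
      rw [this]; field_simp; nlinarith [hpq]
    have h2 : 0 < q * ν := mul_pos hq hν0
    have h3 : 0 < 2 * Real.cos θ := by linarith
    nlinarith
  have hp' : p = 2 * ν * Real.cos θ := by
    have : p = ν ^ 2 * q := by field_simp at hν2 ⊢; linarith [hν2]
    rw [this]; nlinarith [hqν]
  set c := Real.cos θ with hc
  set sθ := Real.sin θ with hsθ
  have hsc : sθ ^ 2 + c ^ 2 = 1 := Real.sin_sq_add_cos_sq θ
  induction n with
  | zero =>
    simp only [Function.iterate_zero, id_eq, Nat.cast_zero]
    rw [show ((2 : ℝ) * 0 + 1) * θ = θ by ring, show (2 : ℝ) * 0 * θ = 0 by ring,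
      show ((2 : ℝ) * 0 - 1) * θ = -θ by ring, Real.sin_zero, Real.sin_neg]
    rw [← hsθ]
    field_simp
    simp only [Prod.mk.injEq]
    constructor <;> field_simp <;> ring
  | succ n ih =>
    rw [Function.iterate_succ_apply', ih, hτ]
    set x := 2 * (n : ℝ) * θ with hxdef
    -- general trig identities
    have L1 : ∀ y : ℝ, Real.sin (y + 3 * θ) = (4 * c ^ 2 - 1) * Real.sin (y + θ) - 2 * c * Real.sin y := by
      intro y
      rw [Real.sin_add y (3 * θ), Real.sin_three_mul, Real.cos_three_mul, Real.sin_add y θ]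
      linear_combination (-4 * Real.cos y * sθ) * hsc
    have L2 : ∀ y : ℝ, Real.sin (y + 2 * θ) = (4 * c ^ 2 - 1) * Real.sin y - 2 * c * Real.sin (y - θ) := by
      intro y
      rw [Real.sin_add y (2 * θ), Real.sin_two_mul, Real.cos_two_mul, Real.sin_sub y θ]
      ring
    have L3 : ∀ y : ℝ, Real.sin (y + 2 * θ) = 2 * c * Real.sin (y + θ) - Real.sin y := by
      intro y
      rw [Real.sin_add y (2 * θ), Real.sin_two_mul, Real.cos_two_mul, Real.sin_add y θ]
      ring
    have L4 : ∀ y : ℝ, Real.sin (y + θ) = 2 * c * Real.sin y - Real.sin (y - θ) := by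
      intro y
      rw [Real.sin_add y θ, Real.sin_sub y θ]
      ring
    push_cast
    rw [show (2 * ((n : ℝ) + 1) + 1) * θ = x + 3 * θ by rw [hxdef]; ring,
      show 2 * ((n : ℝ) + 1) * θ = x + 2 * θ by rw [hxdef]; ring,
      show (2 * ((n : ℝ) + 1) - 1) * θ = x + θ by rw [hxdef]; ring,
      show (2 * (n : ℝ) + 1) * θ = x + θ by rw [hxdef]; ring,
      show (2 * (n : ℝ) - 1) * θ = x - θ by rw [hxdef]; ring]
    rw [L1 x, L2 x, L4 x]
    have hq2 : q = 2 * c / ν := by field_simp; linarith [hqν]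
    rw [hp', hq2]
    simp only [Prod.mk.injEq]
    constructor
    · field_simp
      ring
    · field_simp
      ring
end

section
/- Let p, q > 0 with pq = 4cos²(π/m), m an integer ≥ 3, and let μ be the tropical mutation map μ(s,t) = (-s + q·max(t + p·max(s,0), 0), -t - p·max(s,0)). Then μ is periodic: μ^(m+2) = id when m is odd, and μ^((m+2)/2) = id when m is even. -/
open Real

noncomputable def tropH (p : ℝ) (m : ℕ) (i : ℕ) : ℝ × ℝ :=
  (Real.sin (2 * (π / m)) * Real.sin ((((i % (m + 2) : ℕ) : ℝ) - 1) * (π / m)),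
   -p * (Real.sin (π / m) * Real.sin (((i % (m + 2) : ℕ) : ℝ) * (π / m))))

lemma tropH_congr (p : ℝ) (m : ℕ) {i j : ℕ} (h : i % (m + 2) = j % (m + 2)) :
    tropH p m i = tropH p m j := by simp [tropH, h]

section trig
variable {m : ℕ} (hm : 3 ≤ m)
include hm

lemma trig_mul_pi_div : (m : ℝ) * (π / m) = π := by
  field_simp

lemma trig_theta_pos : 0 < π / m := by
  have : (0:ℝ) < m := by exact_mod_cast (by omega : 0 < m)
  positivity

lemma trig_theta_le : π / m ≤ π / 3 := by
  have h3 : (3:ℝ) ≤ m := by exact_mod_cast hm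
  exact div_le_div_of_nonneg_left pi_pos.le (by norm_num) h3 |>.trans_eq rfl

lemma trig_sin1_pos : 0 < Real.sin (π / m) := by
  apply Real.sin_pos_of_pos_of_lt_pi (trig_theta_pos hm)
  calc π / m ≤ π / 3 := trig_theta_le hm
    _ < π := by linarith [pi_pos]

lemma trig_cos1_pos : 0 < Real.cos (π / m) := by
  apply Real.cos_pos_of_mem_Ioo
  constructor
  · linarith [trig_theta_pos hm, pi_pos]
  · calc π / m ≤ π / 3 := trig_theta_le hm
      _ < π / 2 := by linarith [pi_pos]

lemma trig_sin2_eq : Real.sin (2 * (π / m)) = 2 * Real.sin (π / m) * Real.cos (π / m) :=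
  Real.sin_two_mul _

lemma trig_sin2_pos : 0 < Real.sin (2 * (π / m)) := by
  rw [trig_sin2_eq hm]
  have := trig_sin1_pos hm
  have := trig_cos1_pos hm
  positivity

lemma trig_sin_nn {x : ℝ} (h0 : 0 ≤ x) (h1 : x ≤ m) : 0 ≤ Real.sin (x * (π / m)) := by
  have ht := trig_theta_pos hm
  apply Real.sin_nonneg_of_nonneg_of_le_pi
  · positivity
  · have h2 : x * (π / m) ≤ (m : ℝ) * (π / m) := mul_le_mul_of_nonneg_right h1 ht.le
    rw [trig_mul_pi_div hm] at h2
    exact h2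

lemma trig_rec (x : ℝ) : Real.sin (x * (π / m)) =
    2 * Real.cos (π / m) * Real.sin ((x - 1) * (π / m)) - Real.sin ((x - 2) * (π / m)) := by
  have h1 : x * (π / m) = (x - 1) * (π / m) + π / m := by ring
  have h2 : (x - 2) * (π / m) = (x - 1) * (π / m) - π / m := by ring
  rw [h1, h2, Real.sin_add, Real.sin_sub]; ring

lemma trig_sin_m : Real.sin ((m : ℝ) * (π / m)) = 0 := by
  rw [trig_mul_pi_div hm]; exact Real.sin_pi

lemma trig_sin_m1 : Real.sin (((m : ℝ) - 1) * (π / m)) = Real.sin (π / m) := by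
  rw [show ((m : ℝ) - 1) * (π / m) = π - π / m by
    rw [sub_mul, trig_mul_pi_div hm, one_mul]]
  exact Real.sin_pi_sub _

lemma trig_sin_m2 : Real.sin (((m : ℝ) - 2) * (π / m)) = Real.sin (2 * (π / m)) := by
  rw [show ((m : ℝ) - 2) * (π / m) = π - 2 * (π / m) by
    rw [sub_mul, trig_mul_pi_div hm]]
  exact Real.sin_pi_sub _

lemma trig_sin_mp1 : Real.sin (((m : ℝ) + 1) * (π / m)) = -Real.sin (π / m) := by
  rw [show ((m : ℝ) + 1) * (π / m) = π + π / m by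
    rw [add_mul, trig_mul_pi_div hm, one_mul]]
  rw [Real.sin_add, Real.sin_pi, Real.cos_pi]; ring

lemma trig_prod (y z : ℝ) : Real.sin (y + z) * Real.sin (y - z) =
    Real.sin y ^ 2 - Real.sin z ^ 2 := by
  rw [Real.sin_add, Real.sin_sub]
  have hy := Real.sin_sq_add_cos_sq y
  have hz := Real.sin_sq_add_cos_sq z
  nlinarith [hy, hz]

end trig

set_option maxHeartbeats 1600000 in
lemma trop_step (p q : ℝ) (hp : 0 < p) (hq : 0 < q) (m : ℕ) (hm : 3 ≤ m)
    (hpq : p * q = 4 * Real.cos (π / m) ^ 2)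
    (μ : ℝ × ℝ → ℝ × ℝ)
    (hμ : ∀ s t : ℝ, μ (s, t) = (-s + q * max (t + p * max s 0) 0, -t - p * max s 0))
    (i : ℕ) {a b : ℝ} (ha : 0 ≤ a) (hb : 0 ≤ b) :
    μ (a • tropH p m i + b • tropH p m (i + 1)) =
      a • tropH p m (i + m) + b • tropH p m (i + m + 1) := by
  have hs1 := trig_sin1_pos hm
  have hc1 := trig_cos1_pos hm
  have hs2 := trig_sin2_pos hm
  have e2 := trig_sin2_eq hm
  have rec' : ∀ y z w : ℝ, y - 1 = z → y - 2 = w →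
      Real.sin (y * (π / m)) =
        2 * Real.cos (π / m) * Real.sin (z * (π / m)) - Real.sin (w * (π / m)) := by
    intro y z w hz hw
    rw [← hz, ← hw]
    exact trig_rec hm y
  have hnn : ∀ x : ℝ, 0 ≤ x → x ≤ m → 0 ≤ Real.sin (x * (π / m)) :=
    fun x h0 h1 => trig_sin_nn hm h0 h1
  -- region lemmas for μ
  have muR1 : ∀ s t : ℝ, 0 ≤ s → 0 ≤ t + p * s →
      μ (s, t) = (-s + q * (t + p * s), -t - p * s) := by
    intro s t h1 h2
    rw [hμ, max_eq_left h1, max_eq_left h2]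
  have muR2 : ∀ s t : ℝ, s ≤ 0 → 0 ≤ t → μ (s, t) = (-s + q * t, -t) := by
    intro s t h1 h2
    rw [hμ, max_eq_right h1, mul_zero, add_zero, max_eq_left h2, sub_zero]
  have muR3 : ∀ s t : ℝ, s ≤ 0 → t ≤ 0 → μ (s, t) = (-s, -t) := by
    intro s t h1 h2
    rw [hμ, max_eq_right h1, mul_zero, add_zero, max_eq_right h2, mul_zero, add_zero, sub_zero]
  have muR4 : ∀ s t : ℝ, 0 ≤ s → t + p * s ≤ 0 → μ (s, t) = (-s, -t - p * s) := by
    intro s t h1 h2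
    rw [hμ, max_eq_left h1, max_eq_right h2, mul_zero, add_zero]
  -- modular bookkeeping
  have hilt : i % (m + 2) < m + 2 := Nat.mod_lt _ (by omega)
  have hmod : ∀ k : ℕ, (i + k) % (m + 2) = (i % (m + 2) + k) % (m + 2) := by
    intro k
    conv_lhs => rw [← Nat.mod_add_div i (m + 2)]
    rw [show i % (m + 2) + (m + 2) * (i / (m + 2)) + k
        = i % (m + 2) + k + (m + 2) * (i / (m + 2)) by ring]
    exact Nat.add_mul_mod_self_left _ _ _
  have modc : ∀ a b : ℕ, (a = b ∨ a = b + (m + 2)) → b < m + 2 → a % (m + 2) = b := by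
    rintro a b (rfl | rfl) h2
    · exact Nat.mod_eq_of_lt h2
    · rw [Nat.add_mod_right]; exact Nat.mod_eq_of_lt h2
  have Hval : ∀ (j : ℕ) (y1 y0 : ℝ), ((j % (m + 2) : ℕ) : ℝ) - 1 = y1 →
      ((j % (m + 2) : ℕ) : ℝ) = y0 →
      tropH p m j = (Real.sin (2 * (π / m)) * Real.sin (y1 * (π / m)),
        -p * (Real.sin (π / m) * Real.sin (y0 * (π / m)))) := by
    intro j y1 y0 h1 h0
    simp only [tropH]
    rw [← h1, ← h0]
  -- useful sine values
  have z0 : Real.sin ((0 : ℝ) * (π / m)) = 0 := by rw [zero_mul, Real.sin_zero]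
  have z1 : Real.sin ((1 : ℝ) * (π / m)) = Real.sin (π / m) := by rw [one_mul]
  have zneg : Real.sin ((-1 : ℝ) * (π / m)) = -Real.sin (π / m) := by
    rw [neg_one_mul, Real.sin_neg]
  have zm := trig_sin_m hm
  have zm1 := trig_sin_m1 hm
  have zm2 := trig_sin_m2 hm
  have zmp1 := trig_sin_mp1 hm
  rcases eq_or_ne (i % (m + 2)) 0 with h | hne0
  · -- R3 case : pair ((-s2*s1,0),(0,-p*s1*s1)) ↦ negation
    have m1 : (i + 1) % (m + 2) = 1 := by
      rw [hmod]; exact modc _ _ (by omega) (by omega)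
    have m2 : (i + m) % (m + 2) = m := by
      rw [hmod]; exact modc _ _ (by omega) (by omega)
    have m3 : (i + m + 1) % (m + 2) = m + 1 := by
      rw [add_assoc, hmod]; exact modc _ _ (by omega) (by omega)
    have e_u : tropH p m i = (-(Real.sin (2 * (π / m)) * Real.sin (π / m)), 0) := by
      rw [Hval i (-1) 0 (by rw [h]; norm_num) (by rw [h]; norm_num), zneg, z0]
      rw [Prod.mk.injEq]; exact ⟨by ring, by ring⟩
    have e_v : tropH p m (i + 1) = (0, -p * (Real.sin (π / m) * Real.sin (π / m))) := by
      rw [Hval (i + 1) 0 1 (by rw [m1]; norm_num) (by rw [m1]; norm_num), z0, z1, mul_zero]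
    have e_t1 : tropH p m (i + m) = (Real.sin (2 * (π / m)) * Real.sin (π / m), 0) := by
      rw [Hval (i + m) ((m : ℝ) - 1) (m : ℝ) (by rw [m2]) (by rw [m2]), zm1, zm]
      rw [Prod.mk.injEq]; exact ⟨by ring, by ring⟩
    have e_t2 : tropH p m (i + m + 1) = (0, p * (Real.sin (π / m) * Real.sin (π / m))) := by
      rw [Hval (i + m + 1) (m : ℝ) ((m : ℝ) + 1) (by rw [m3]; push_cast; ring)
        (by rw [m3]; push_cast; ring), zm, zmp1]
      rw [Prod.mk.injEq]; exact ⟨by ring, by ring⟩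
    rw [e_u, e_v, e_t1, e_t2]
    simp only [Prod.smul_mk, smul_eq_mul, Prod.mk_add_mk]
    rw [muR3 _ _ (by nlinarith [mul_nonneg (mul_nonneg ha hs2.le) hs1.le])
      (by nlinarith [mul_nonneg (mul_nonneg (mul_nonneg hb hp.le) hs1.le) hs1.le])]
    rw [Prod.mk.injEq]
    constructor <;> ring
  · rcases eq_or_ne (i % (m + 2)) 1 with h | hne1
    · -- R4 case
      have m1 : (i + 1) % (m + 2) = 2 := by
        rw [hmod]; exact modc _ _ (by omega) (by omega)
      have m2 : (i + m) % (m + 2) = m + 1 := by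
        rw [hmod]; exact modc _ _ (by omega) (by omega)
      have m3 : (i + m + 1) % (m + 2) = 0 := by
        rw [add_assoc, hmod]; exact modc _ _ (by omega) (by omega)
      have e_u : tropH p m i = (0, -p * (Real.sin (π / m) * Real.sin (π / m))) := by
        rw [Hval i 0 1 (by rw [h]; norm_num) (by rw [h]; norm_num), z0, z1, mul_zero]
      have e_v : tropH p m (i + 1) =
          (Real.sin (2 * (π / m)) * Real.sin (π / m),
           -p * (Real.sin (π / m) * Real.sin (2 * (π / m)))) := by
        rw [Hval (i + 1) 1 2 (by rw [m1]; norm_num) (by rw [m1]; norm_num), z1]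
      have e_t1 : tropH p m (i + m) = (0, p * (Real.sin (π / m) * Real.sin (π / m))) := by
        rw [Hval (i + m) (m : ℝ) ((m : ℝ) + 1) (by rw [m2]; push_cast; ring)
          (by rw [m2]; push_cast; ring), zm, zmp1]
        rw [Prod.mk.injEq]; exact ⟨by ring, by ring⟩
      have e_t2 : tropH p m (i + m + 1) =
          (-(Real.sin (2 * (π / m)) * Real.sin (π / m)), 0) := by
        rw [Hval (i + m + 1) (-1) 0 (by rw [m3]; norm_num) (by rw [m3]; norm_num), zneg, z0]
        rw [Prod.mk.injEq]; exact ⟨by ring, by ring⟩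
      rw [e_u, e_v, e_t1, e_t2]
      simp only [Prod.smul_mk, smul_eq_mul, Prod.mk_add_mk]
      rw [muR4 _ _ (by nlinarith [mul_nonneg (mul_nonneg hb hs2.le) hs1.le])
        (by nlinarith [mul_nonneg (mul_nonneg (mul_nonneg ha hp.le) hs1.le) hs1.le])]
      rw [Prod.mk.injEq]
      constructor <;> ring
    · rcases eq_or_ne (i % (m + 2)) (m + 1) with h | hne2
      · -- R2 case
        have m1 : (i + 1) % (m + 2) = 0 := by
          rw [hmod]; exact modc _ _ (by omega) (by omega)
        have m2 : (i + m) % (m + 2) = m - 1 := by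
          rw [hmod]; exact modc _ _ (by omega) (by omega)
        have m3 : (i + m + 1) % (m + 2) = m := by
          rw [add_assoc, hmod]; exact modc _ _ (by omega) (by omega)
        have e_u : tropH p m i = (0, p * (Real.sin (π / m) * Real.sin (π / m))) := by
          rw [Hval i (m : ℝ) ((m : ℝ) + 1) (by rw [h]; push_cast; ring)
            (by rw [h]; push_cast; ring), zm, zmp1]
          rw [Prod.mk.injEq]; exact ⟨by ring, by ring⟩
        have e_v : tropH p m (i + 1) =
            (-(Real.sin (2 * (π / m)) * Real.sin (π / m)), 0) := by
          rw [Hval (i + 1) (-1) 0 (by rw [m1]; norm_num) (by rw [m1]; norm_num), zneg, z0]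
          rw [Prod.mk.injEq]; exact ⟨by ring, by ring⟩
        have e_t1 : tropH p m (i + m) =
            (Real.sin (2 * (π / m)) * Real.sin (2 * (π / m)),
             -p * (Real.sin (π / m) * Real.sin (π / m))) := by
          rw [Hval (i + m) ((m : ℝ) - 2) ((m : ℝ) - 1)
            (by rw [m2, Nat.cast_sub (by omega)]; push_cast; ring)
            (by rw [m2, Nat.cast_sub (by omega)]; push_cast; ring), zm2, zm1]
        have e_t2 : tropH p m (i + m + 1) =
            (Real.sin (2 * (π / m)) * Real.sin (π / m), 0) := by
          rw [Hval (i + m + 1) ((m : ℝ) - 1) (m : ℝ) (by rw [m3]) (by rw [m3]), zm1, zm]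
          rw [Prod.mk.injEq]; exact ⟨by ring, by ring⟩
        rw [e_u, e_v, e_t1, e_t2]
        simp only [Prod.smul_mk, smul_eq_mul, Prod.mk_add_mk]
        rw [muR2 _ _ (by nlinarith [mul_nonneg (mul_nonneg hb hs2.le) hs1.le])
          (by nlinarith [mul_nonneg (mul_nonneg (mul_nonneg ha hp.le) hs1.le) hs1.le])]
        rw [Prod.mk.injEq]
        constructor
        · linear_combination (a * Real.sin (π / m) * Real.sin (π / m)) * hpq +
            (-(a) * (Real.sin (2 * (π / m)) + 2 * Real.sin (π / m) * Real.cos (π / m))) * e2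
        · ring
      · -- generic R1 case : 2 ≤ i % (m+2) ≤ m
        have hk2 : 2 ≤ i % (m + 2) := by omega
        have hkm : i % (m + 2) ≤ m := by omega
        have m1 : (i + 1) % (m + 2) = i % (m + 2) + 1 := by
          rw [hmod]; exact modc _ _ (by omega) (by omega)
        have m2 : (i + m) % (m + 2) = i % (m + 2) - 2 := by
          rw [hmod]; exact modc _ _ (by omega) (by omega)
        have m3 : (i + m + 1) % (m + 2) = i % (m + 2) - 1 := by
          rw [add_assoc, hmod]; exact modc _ _ (by omega) (by omega)
        have hx2 : (2 : ℝ) ≤ ((i % (m + 2) : ℕ) : ℝ) := by exact_mod_cast hk2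
        have hxm : ((i % (m + 2) : ℕ) : ℝ) ≤ (m : ℝ) := by exact_mod_cast hkm
        have e_u := Hval i (((i % (m + 2) : ℕ) : ℝ) - 1) ((i % (m + 2) : ℕ) : ℝ) rfl rfl
        have e_v := Hval (i + 1) ((i % (m + 2) : ℕ) : ℝ) (((i % (m + 2) : ℕ) : ℝ) + 1)
          (by rw [m1]; push_cast; ring) (by rw [m1]; push_cast; ring)
        have e_t1 := Hval (i + m) (((i % (m + 2) : ℕ) : ℝ) - 3) (((i % (m + 2) : ℕ) : ℝ) - 2)
          (by rw [m2, Nat.cast_sub (by omega)]; push_cast; ring)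
          (by rw [m2, Nat.cast_sub (by omega)]; push_cast; ring)
        have e_t2 := Hval (i + m + 1) (((i % (m + 2) : ℕ) : ℝ) - 2)
          (((i % (m + 2) : ℕ) : ℝ) - 1)
          (by rw [m3, Nat.cast_sub (by omega)]; push_cast; ring)
          (by rw [m3, Nat.cast_sub (by omega)]; push_cast; ring)
        rw [e_u, e_v, e_t1, e_t2]
        simp only [Prod.smul_mk, smul_eq_mul, Prod.mk_add_mk]
        set x : ℝ := ((i % (m + 2) : ℕ) : ℝ) with hxdef
        have Rp1 := rec' (x + 1) x (x - 1) (by ring) (by ring)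
        have R0 := rec' x (x - 1) (x - 2) (by ring) (by ring)
        have Rm1 := rec' (x - 1) (x - 2) (x - 3) (by ring) (by ring)
        have nS0 : 0 ≤ Real.sin (x * (π / m)) := hnn _ (by linarith) hxm
        have nS1 : 0 ≤ Real.sin ((x - 1) * (π / m)) := hnn _ (by linarith) (by linarith)
        have nS2 : 0 ≤ Real.sin ((x - 2) * (π / m)) := hnn _ (by linarith) (by linarith)
        have hS : 0 ≤ a * (Real.sin (2 * (π / m)) * Real.sin ((x - 1) * (π / m))) +
            b * (Real.sin (2 * (π / m)) * Real.sin (x * (π / m))) := by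
          have h1 := mul_nonneg ha (mul_nonneg hs2.le nS1)
          have h2 := mul_nonneg hb (mul_nonneg hs2.le nS0)
          linarith
        have hTkey : (a * (-p * (Real.sin (π / m) * Real.sin (x * (π / m)))) +
              b * (-p * (Real.sin (π / m) * Real.sin ((x + 1) * (π / m))))) +
            p * (a * (Real.sin (2 * (π / m)) * Real.sin ((x - 1) * (π / m))) +
              b * (Real.sin (2 * (π / m)) * Real.sin (x * (π / m)))) =
            p * (Real.sin (π / m) * (a * Real.sin ((x - 2) * (π / m)) +
              b * Real.sin ((x - 1) * (π / m)))) := by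
          linear_combination (-(b) * p * Real.sin (π / m)) * Rp1 +
            (b * p * Real.sin (2 * (π / m)) - 2 * b * p * Real.cos (π / m) * Real.sin (π / m) -
              a * p * Real.sin (π / m)) * R0 +
            (2 * b * p * Real.cos (π / m) * Real.sin (2 * (π / m)) -
              4 * b * p * Real.cos (π / m) ^ 2 * Real.sin (π / m) +
              a * p * Real.sin (2 * (π / m)) -
              2 * a * p * Real.cos (π / m) * Real.sin (π / m)) * Rm1 +
            (-(b) * p * Real.sin ((x - 2) * (π / m)) -
              2 * b * p * Real.cos (π / m) * Real.sin ((x - 3) * (π / m)) +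
              4 * b * p * Real.cos (π / m) ^ 2 * Real.sin ((x - 2) * (π / m)) -
              a * p * Real.sin ((x - 3) * (π / m)) +
              2 * a * p * Real.cos (π / m) * Real.sin ((x - 2) * (π / m))) * e2
        have hT : 0 ≤ (a * (-p * (Real.sin (π / m) * Real.sin (x * (π / m)))) +
              b * (-p * (Real.sin (π / m) * Real.sin ((x + 1) * (π / m))))) +
            p * (a * (Real.sin (2 * (π / m)) * Real.sin ((x - 1) * (π / m))) +
              b * (Real.sin (2 * (π / m)) * Real.sin (x * (π / m)))) := by
          rw [hTkey]
          have h1 := mul_nonneg ha nS2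
          have h2 := mul_nonneg hb nS1
          have := mul_nonneg hp.le (mul_nonneg hs1.le (by linarith :
            (0:ℝ) ≤ a * Real.sin ((x - 2) * (π / m)) + b * Real.sin ((x - 1) * (π / m))))
          linarith
        rw [muR1 _ _ hS hT]
        rw [Prod.mk.injEq]
        constructor
        · linear_combination
            (b * Real.sin (2 * (π / m)) * Real.sin (x * (π / m)) -
              b * Real.sin (π / m) * Real.sin ((x + 1) * (π / m)) +
              a * Real.sin (2 * (π / m)) * Real.sin ((x - 1) * (π / m)) -
              a * Real.sin (π / m) * Real.sin (x * (π / m))) * hpq +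
            (-4 * b * Real.cos (π / m) ^ 2 * Real.sin (π / m)) * Rp1 +
            (-(b) * Real.sin (2 * (π / m)) + 4 * b * Real.cos (π / m) ^ 2 * Real.sin (2 * (π / m)) -
              8 * b * Real.cos (π / m) ^ 3 * Real.sin (π / m) -
              4 * a * Real.cos (π / m) ^ 2 * Real.sin (π / m)) * R0 +
            (-2 * b * Real.cos (π / m) * Real.sin (2 * (π / m)) +
              4 * b * Real.cos (π / m) ^ 2 * Real.sin (π / m) +
              8 * b * Real.cos (π / m) ^ 3 * Real.sin (2 * (π / m)) -
              16 * b * Real.cos (π / m) ^ 4 * Real.sin (π / m) -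
              a * Real.sin (2 * (π / m)) + 4 * a * Real.cos (π / m) ^ 2 * Real.sin (2 * (π / m)) -
              8 * a * Real.cos (π / m) ^ 3 * Real.sin (π / m)) * Rm1 +
            (2 * b * Real.cos (π / m) * Real.sin ((x - 3) * (π / m)) -
              8 * b * Real.cos (π / m) ^ 2 * Real.sin ((x - 2) * (π / m)) -
              8 * b * Real.cos (π / m) ^ 3 * Real.sin ((x - 3) * (π / m)) +
              16 * b * Real.cos (π / m) ^ 4 * Real.sin ((x - 2) * (π / m)) -
              2 * a * Real.cos (π / m) * Real.sin ((x - 2) * (π / m)) -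
              4 * a * Real.cos (π / m) ^ 2 * Real.sin ((x - 3) * (π / m)) +
              8 * a * Real.cos (π / m) ^ 3 * Real.sin ((x - 2) * (π / m))) * e2
        · linear_combination (b * p * Real.sin (π / m)) * Rp1 +
            (-(b) * p * Real.sin (2 * (π / m)) + 2 * b * p * Real.cos (π / m) * Real.sin (π / m) +
              a * p * Real.sin (π / m)) * R0 +
            (-2 * b * p * Real.cos (π / m) * Real.sin (2 * (π / m)) +
              4 * b * p * Real.cos (π / m) ^ 2 * Real.sin (π / m) -
              a * p * Real.sin (2 * (π / m)) +
              2 * a * p * Real.cos (π / m) * Real.sin (π / m)) * Rm1 +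
            (b * p * Real.sin ((x - 2) * (π / m)) +
              2 * b * p * Real.cos (π / m) * Real.sin ((x - 3) * (π / m)) -
              4 * b * p * Real.cos (π / m) ^ 2 * Real.sin ((x - 2) * (π / m)) +
              a * p * Real.sin ((x - 3) * (π / m)) -
              2 * a * p * Real.cos (π / m) * Real.sin ((x - 2) * (π / m))) * e2

lemma trop_iter (p q : ℝ) (hp : 0 < p) (hq : 0 < q) (m : ℕ) (hm : 3 ≤ m)
    (hpq : p * q = 4 * Real.cos (π / m) ^ 2)
    (μ : ℝ × ℝ → ℝ × ℝ)
    (hμ : ∀ s t : ℝ, μ (s, t) = (-s + q * max (t + p * max s 0) 0, -t - p * max s 0)) :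
    ∀ n i : ℕ, ∀ a b : ℝ, 0 ≤ a → 0 ≤ b →
      μ^[n] (a • tropH p m i + b • tropH p m (i + 1)) =
        a • tropH p m (i + n * m) + b • tropH p m (i + n * m + 1) := by
  intro n
  induction n with
  | zero => intro i a b ha hb; simp
  | succ n ih =>
    intro i a b ha hb
    rw [Function.iterate_succ_apply', ih i a b ha hb,
      trop_step p q hp hq m hm hpq μ hμ (i + n * m) ha hb, Nat.succ_mul, ← add_assoc]

set_option maxHeartbeats 1600000 in
lemma trop_cover (p : ℝ) (hp : 0 < p) (m : ℕ) (hm : 3 ≤ m) (x : ℝ × ℝ) :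
    ∃ (i : ℕ) (a b : ℝ), 0 ≤ a ∧ 0 ≤ b ∧ x = a • tropH p m i + b • tropH p m (i + 1) := by
  have hs1 := trig_sin1_pos hm
  have hs2 := trig_sin2_pos hm
  have Hval : ∀ (j : ℕ) (y1 y0 : ℝ), ((j % (m + 2) : ℕ) : ℝ) - 1 = y1 →
      ((j % (m + 2) : ℕ) : ℝ) = y0 →
      tropH p m j = (Real.sin (2 * (π / m)) * Real.sin (y1 * (π / m)),
        -p * (Real.sin (π / m) * Real.sin (y0 * (π / m)))) := by
    intro j y1 y0 h1 h0
    simp only [tropH]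
    rw [← h1, ← h0]
  have z0 : Real.sin ((0 : ℝ) * (π / m)) = 0 := by rw [zero_mul, Real.sin_zero]
  have zneg : Real.sin ((-1 : ℝ) * (π / m)) = -Real.sin (π / m) := by
    rw [neg_one_mul, Real.sin_neg]
  have zm := trig_sin_m hm
  have zm1 := trig_sin_m1 hm
  have zmp1 := trig_sin_mp1 hm
  have prod' : ∀ y z w : ℝ, y + 1 = z → y - 1 = w →
      Real.sin (z * (π / m)) * Real.sin (w * (π / m)) =
        Real.sin (y * (π / m)) ^ 2 - Real.sin (π / m) ^ 2 := by
    intro y z w hz hw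
    rw [← hz, ← hw, add_mul, one_mul, sub_mul, one_mul]
    exact trig_prod hm _ _
  -- determinant of consecutive rays is the positive constant p * s1^3 * s2
  have hD : (0 : ℝ) < p * Real.sin (π / m) ^ 3 * Real.sin (2 * (π / m)) := by positivity
  have hdet : ∀ i : ℕ, (tropH p m i).1 * (tropH p m (i + 1)).2 -
      (tropH p m i).2 * (tropH p m (i + 1)).1 =
      p * Real.sin (π / m) ^ 3 * Real.sin (2 * (π / m)) := by
    intro i
    have hilt : i % (m + 2) < m + 2 := Nat.mod_lt _ (by omega)
    have hmod : (i + 1) % (m + 2) = (i % (m + 2) + 1) % (m + 2) := by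
      conv_lhs => rw [← Nat.mod_add_div i (m + 2)]
      rw [show i % (m + 2) + (m + 2) * (i / (m + 2)) + 1
          = i % (m + 2) + 1 + (m + 2) * (i / (m + 2)) by ring]
      exact Nat.add_mul_mod_self_left _ _ _
    have modc : ∀ a b : ℕ, (a = b ∨ a = b + (m + 2)) → b < m + 2 → a % (m + 2) = b := by
      rintro a b (rfl | rfl) h2
      · exact Nat.mod_eq_of_lt h2
      · rw [Nat.add_mod_right]; exact Nat.mod_eq_of_lt h2
    rcases eq_or_ne (i % (m + 2)) (m + 1) with h | hne
    · have m1 : (i + 1) % (m + 2) = 0 := by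
        rw [hmod]; exact modc _ _ (by omega) (by omega)
      have e_u : tropH p m i = (0, p * (Real.sin (π / m) * Real.sin (π / m))) := by
        rw [Hval i (m : ℝ) ((m : ℝ) + 1) (by rw [h]; push_cast; ring)
          (by rw [h]; push_cast; ring), zm, zmp1]
        rw [Prod.mk.injEq]; exact ⟨by ring, by ring⟩
      have e_v : tropH p m (i + 1) =
          (-(Real.sin (2 * (π / m)) * Real.sin (π / m)), 0) := by
        rw [Hval (i + 1) (-1) 0 (by rw [m1]; norm_num) (by rw [m1]; norm_num), zneg, z0]
        rw [Prod.mk.injEq]; exact ⟨by ring, by ring⟩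
      rw [e_u, e_v]; ring
    · have hle : i % (m + 2) ≤ m := by omega
      have m1 : (i + 1) % (m + 2) = i % (m + 2) + 1 := by
        rw [hmod]; exact Nat.mod_eq_of_lt (by omega)
      have e_u := Hval i (((i % (m + 2) : ℕ) : ℝ) - 1) ((i % (m + 2) : ℕ) : ℝ) rfl rfl
      have e_v := Hval (i + 1) ((i % (m + 2) : ℕ) : ℝ) (((i % (m + 2) : ℕ) : ℝ) + 1)
        (by rw [m1]; push_cast; ring) (by rw [m1]; push_cast; ring)
      rw [e_u, e_v]
      have hpr := prod' ((i % (m + 2) : ℕ) : ℝ) (((i % (m + 2) : ℕ) : ℝ) + 1)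
        (((i % (m + 2) : ℕ) : ℝ) - 1) (by ring) (by ring)
      simp only
      linear_combination (-p * Real.sin (π / m) * Real.sin (2 * (π / m))) * hpr
  -- Cramer step
  have cram : ∀ i : ℕ, 0 ≤ (tropH p m i).1 * x.2 - (tropH p m i).2 * x.1 →
      (tropH p m (i + 1)).1 * x.2 - (tropH p m (i + 1)).2 * x.1 ≤ 0 →
      ∃ (i' : ℕ) (a b : ℝ), 0 ≤ a ∧ 0 ≤ b ∧
        x = a • tropH p m i' + b • tropH p m (i' + 1) := by
    intro i h1 h2
    set D := p * Real.sin (π / m) ^ 3 * Real.sin (2 * (π / m)) with hDdef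
    refine ⟨i, (x.1 * (tropH p m (i + 1)).2 - x.2 * (tropH p m (i + 1)).1) / D,
      ((tropH p m i).1 * x.2 - (tropH p m i).2 * x.1) / D, ?_, ?_, ?_⟩
    · apply div_nonneg _ hD.le
      nlinarith [h2]
    · exact div_nonneg h1 hD.le
    · have hd := hdet i
      have hne : D ≠ 0 := hD.ne'
      apply Prod.ext
      · simp only [Prod.fst_add, Prod.smul_fst, smul_eq_mul]
        rw [div_mul_eq_mul_div, div_mul_eq_mul_div, ← add_div, eq_div_iff hne]
        linear_combination (-x.1) * hd
      · simp only [Prod.snd_add, Prod.smul_snd, smul_eq_mul]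
        rw [div_mul_eq_mul_div, div_mul_eq_mul_div, ← add_div, eq_div_iff hne]
        linear_combination (-x.2) * hd
  -- endpoint values
  have e_0 : tropH p m 0 = (-(Real.sin (2 * (π / m)) * Real.sin (π / m)), 0) := by
    rw [Hval 0 (-1) 0 (by rw [Nat.zero_mod]; norm_num) (by rw [Nat.zero_mod]; norm_num),
      zneg, z0]
    rw [Prod.mk.injEq]; exact ⟨by ring, by ring⟩
  have e_m : tropH p m m = (Real.sin (2 * (π / m)) * Real.sin (π / m), 0) := by
    rw [Hval m ((m : ℝ) - 1) (m : ℝ) (by rw [Nat.mod_eq_of_lt (by omega)])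
      (by rw [Nat.mod_eq_of_lt (by omega)]), zm1, zm]
    rw [Prod.mk.injEq]; exact ⟨by ring, by ring⟩
  have e_m2 : tropH p m (m + 2) = tropH p m 0 := by
    apply tropH_congr
    rw [Nat.mod_self, Nat.zero_mod]
  -- discrete sign-change search
  have ivt : ∀ n : ℕ, ∀ g : ℕ → ℝ, 0 ≤ g 0 → g n < 0 →
      ∃ j, j < n ∧ 0 ≤ g j ∧ g (j + 1) ≤ 0 := by
    intro n
    induction n with
    | zero => intro g h0 h1; linarith
    | succ n ih =>
      intro g h0 h1
      by_cases hc : 0 ≤ g n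
      · exact ⟨n, by omega, hc, h1.le⟩
      · obtain ⟨j, hj, h2, h3⟩ := ih g h0 (by linarith)
        exact ⟨j, by omega, h2, h3⟩
  rcases lt_trichotomy x.2 0 with hneg | hzero | hpos
  · obtain ⟨j, _, hj1, hj2⟩ := ivt m (fun j => (tropH p m j).1 * x.2 - (tropH p m j).2 * x.1)
      (by show 0 ≤ (tropH p m 0).1 * x.2 - (tropH p m 0).2 * x.1
          rw [e_0]; simp only; nlinarith [mul_pos hs2 hs1])
      (by show (tropH p m m).1 * x.2 - (tropH p m m).2 * x.1 < 0
          rw [e_m]; simp only; nlinarith [mul_pos hs2 hs1])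
    exact cram j hj1 hj2
  · rcases le_or_gt 0 x.1 with h1 | h1
    · refine ⟨m, x.1 / (Real.sin (2 * (π / m)) * Real.sin (π / m)), 0, ?_, le_refl 0, ?_⟩
      · apply div_nonneg h1 (mul_nonneg hs2.le hs1.le)
      · have hne21 : Real.sin (2 * (π / m)) * Real.sin (π / m) ≠ 0 := (mul_pos hs2 hs1).ne'
        apply Prod.ext
        · simp only [Prod.fst_add, Prod.smul_fst, smul_eq_mul, e_m]
          rw [div_mul_cancel₀ _ hne21, zero_mul, add_zero]
        · simp only [Prod.snd_add, Prod.smul_snd, smul_eq_mul, e_m]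
          rw [hzero]; ring
    · refine ⟨0, -x.1 / (Real.sin (2 * (π / m)) * Real.sin (π / m)), 0, ?_, le_refl 0, ?_⟩
      · apply div_nonneg (by linarith) (mul_nonneg hs2.le hs1.le)
      · have hne21 : Real.sin (2 * (π / m)) * Real.sin (π / m) ≠ 0 := (mul_pos hs2 hs1).ne'
        apply Prod.ext
        · simp only [Prod.fst_add, Prod.smul_fst, smul_eq_mul, e_0]
          rw [mul_neg, div_mul_cancel₀ _ hne21, zero_mul, add_zero, neg_neg]
        · simp only [Prod.snd_add, Prod.smul_snd, smul_eq_mul, e_0]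
          rw [hzero]; ring
  · obtain ⟨j, _, hj1, hj2⟩ := ivt 2
      (fun j => (tropH p m (m + j)).1 * x.2 - (tropH p m (m + j)).2 * x.1)
      (by show 0 ≤ (tropH p m (m + 0)).1 * x.2 - (tropH p m (m + 0)).2 * x.1
          rw [Nat.add_zero, e_m]; simp only; nlinarith [mul_pos hs2 hs1])
      (by show (tropH p m (m + 2)).1 * x.2 - (tropH p m (m + 2)).2 * x.1 < 0
          rw [e_m2, e_0]; simp only; nlinarith [mul_pos hs2 hs1])
    refine cram (m + j) hj1 ?_
    have hrw : m + (j + 1) = m + j + 1 := by omega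
    rw [hrw] at hj2
    exact hj2


theorem stmt_10 (p q : ℝ) (hp : 0 < p) (hq : 0 < q) (m : ℕ) (hm : 3 ≤ m)
    (hpq : p * q = 4 * Real.cos (π / m) ^ 2)
    (μ : ℝ × ℝ → ℝ × ℝ)
    (hμ : ∀ s t : ℝ, μ (s, t) = (-s + q * max (t + p * max s 0) 0, -t - p * max s 0)) :
    (Odd m → μ^[m + 2] = id) ∧ (Even m → μ^[(m + 2) / 2] = id) := by
  have key : ∀ N : ℕ, N * m % (m + 2) = 0 → μ^[N] = id := by
    intro N hN
    funext x
    obtain ⟨i, a, b, ha, hb, hx⟩ := trop_cover p hp m hm x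
    have hiter := trop_iter p q hp hq m hm hpq μ hμ N i a b ha hb
    have c1 : tropH p m (i + N * m) = tropH p m i := by
      apply tropH_congr
      simp [Nat.add_mod, hN]
    have c2 : tropH p m (i + N * m + 1) = tropH p m (i + 1) := by
      apply tropH_congr
      rw [show i + N * m + 1 = (i + 1) + N * m by omega]
      simp [Nat.add_mod, hN]
    simp only [id_eq]
    rw [hx, hiter, c1, c2]
  constructor
  · intro _
    exact key (m + 2) (Nat.mul_mod_right _ _)
  · intro heven
    obtain ⟨k, hk⟩ := heven
    apply key ((m + 2) / 2)
    have h2 : (m + 2) / 2 * m = (m + 2) * k := by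
      subst hk
      rw [show (k + k + 2) / 2 = k + 1 by omega]
      ring
    rw [h2]
    exact Nat.mul_mod_right _ _
end

section
/- Let p, q > 0 with pq > 4, and suppose (s,t) lies in region R: s > 0, t < 0, and sqrt(p)·s + sqrt(q)·t ≥ 0. Let t' = -ps - t. Then t' ≤ (sqrt(pq) - 1)·t < t < 0; in particular |t'| ≥ (sqrt(pq)-1)·|t| > |t|, so the second coordinate grows in absolute value by a factor of at least sqrt(pq) - 1 > 1. -/
theorem stmt_17 (p q s t : ℝ) (hp : 0 < p) (hq : 0 < q) (hpq : 4 < p * q)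
    (hs : 0 < s) (ht : t < 0) (h : 0 ≤ Real.sqrt p * s + Real.sqrt q * t) :
    -p * s - t ≤ (Real.sqrt (p * q) - 1) * t ∧ (Real.sqrt (p * q) - 1) * t < t ∧ t < 0 ∧
    (Real.sqrt (p * q) - 1) * |t| ≤ |(-p * s - t)| ∧ |t| < (Real.sqrt (p * q) - 1) * |t| ∧
    1 < Real.sqrt (p * q) - 1 := by
  have hsp : Real.sqrt p ^ 2 = p := Real.sq_sqrt hp.le
  have hsq : Real.sqrt q ^ 2 = q := Real.sq_sqrt hq.le
  have hmul : Real.sqrt (p * q) = Real.sqrt p * Real.sqrt q := Real.sqrt_mul hp.le q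
  have h2 : 2 < Real.sqrt (p * q) := by
    have := Real.sqrt_lt_sqrt (by norm_num : (0:ℝ) ≤ 4) hpq
    simpa [Real.sqrt_eq_iff_eq_sq, show Real.sqrt 4 = 2 by
      rw [show (4:ℝ) = 2^2 by norm_num, Real.sqrt_sq (by norm_num)]] using this
  have h1 : -p * s - t ≤ (Real.sqrt (p * q) - 1) * t := by
    nlinarith [mul_nonneg (Real.sqrt_nonneg p) h]
  have h3 : (Real.sqrt (p * q) - 1) * t < t := by nlinarith
  have habs : |t| = -t := abs_of_neg ht
  have ht' : -p * s - t < 0 := by nlinarith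
  have habs' : |(-p * s - t)| = -(-p * s - t) := abs_of_neg ht'
  refine ⟨h1, h3, ht, ?_, ?_, by linarith⟩
  · rw [habs, habs']; nlinarith
  · rw [habs]; nlinarith
end

section
/- Let p, q > 0 with pq < 4, write pq = 4cos²θ, 0 < θ < π/2. If (2n+2)θ ≤ π and s, t ≥ 0, then μ^(n+1)(s,t) = τ^(n+1)(s,t), where μ is the piecewise-linear tropical mutation map and τ is the linear map τ(s,t) = ((pq-1)s + qt, -ps - t). -/
open Real

private lemma tau_closed (p q θ : ℝ) (hpq : p * q = 4 * Real.cos θ ^ 2)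
    (τ : ℝ × ℝ → ℝ × ℝ)
    (hτ : ∀ s t : ℝ, τ (s, t) = ((p * q - 1) * s + q * t, -p * s - t))
    (s t : ℝ) : ∀ k : ℕ,
    (τ^[k] (s, t)).1 * (Real.sin θ * Real.cos θ)
      = s * Real.sin (2 * k * θ + θ) * Real.cos θ + q * t * Real.sin (2 * k * θ) / 2
    ∧ (τ^[k] (s, t)).2 * (Real.sin θ * Real.cos θ)
      = -(p * s * Real.sin (2 * k * θ) / 2 + t * Real.sin (2 * k * θ - θ) * Real.cos θ) := by
  intro k
  induction k with
  | zero =>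
      constructor
      · norm_num
        ring
      · norm_num [Real.sin_neg]
        ring
  | succ k ih =>
      obtain ⟨ih1, ih2⟩ := ih
      rw [Function.iterate_succ_apply']
      set A := (τ^[k] (s, t)).1 with hA
      set B := (τ^[k] (s, t)).2 with hB
      have hpair : τ^[k] (s, t) = (A, B) := rfl
      rw [hpair, hτ]
      set X := 2 * (k : ℝ) * θ with hXdef
      have hx1 : 2 * ((k : ℕ) + 1 : ℝ) * θ + θ = X + 3 * θ := by rw [hXdef]; ring
      have hx2 : 2 * ((k : ℕ) + 1 : ℝ) * θ = X + 2 * θ := by rw [hXdef]; ring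
      have hx3 : 2 * ((k : ℕ) + 1 : ℝ) * θ - θ = X + θ := by rw [hXdef]; ring
      have e3 : Real.sin (X + 3 * θ)
          = Real.sin X * (4 * Real.cos θ ^ 3 - 3 * Real.cos θ)
            + Real.cos X * (3 * Real.sin θ - 4 * Real.sin θ ^ 3) := by
        rw [Real.sin_add, Real.sin_three_mul, Real.cos_three_mul]
      have e2 : Real.sin (X + 2 * θ)
          = Real.sin X * (2 * Real.cos θ ^ 2 - 1)
            + Real.cos X * (2 * Real.sin θ * Real.cos θ) := by
        rw [Real.sin_add, Real.sin_two_mul, Real.cos_two_mul]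
      have e1 : Real.sin (X + θ)
          = Real.sin X * Real.cos θ + Real.cos X * Real.sin θ := Real.sin_add X θ
      have e0 : Real.sin (X - θ)
          = Real.sin X * Real.cos θ - Real.cos X * Real.sin θ := Real.sin_sub X θ
      have pyth : Real.sin θ ^ 2 + Real.cos θ ^ 2 = 1 := Real.sin_sq_add_cos_sq θ
      constructor
      · push_cast
        rw [hx1, hx2, e3, e2]
        have ih1' := ih1
        have ih2' := ih2
        rw [e1] at ih1'
        rw [e0] at ih2'
        linear_combination (p * q - 1) * ih1' + q * ih2'
          + (q * t * Real.sin X / 2 + s * Real.cos X * Real.sin θ * Real.cos θ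
              - s * Real.sin X / 2 + s * Real.sin X * Real.cos θ ^ 2) * hpq
          + (4 * s * Real.cos X * Real.sin θ * Real.cos θ) * pyth
      · push_cast
        have hx3' : X + 2 * θ - θ = X + θ := by ring
        rw [hx2, hx3', e2, e1]
        have ih1' := ih1
        have ih2' := ih2
        rw [e1] at ih1'
        rw [e0] at ih2'
        linear_combination (-p) * ih1' - ih2' + (-(t * Real.sin X) / 2) * hpq

theorem stmt_18 (p q θ : ℝ) (hp : 0 < p) (hq : 0 < q)
    (hθ₁ : 0 < θ) (hθ₂ : θ < π / 2) (hpq : p * q = 4 * Real.cos θ ^ 2)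
    (μ τ : ℝ × ℝ → ℝ × ℝ)
    (hμ : ∀ s t : ℝ, μ (s, t) = (-s + q * max (t + p * max s 0) 0, -t - p * max s 0))
    (hτ : ∀ s t : ℝ, τ (s, t) = ((p * q - 1) * s + q * t, -p * s - t))
    (n : ℕ) (hn : (2 * n + 2) * θ ≤ π)
    (s t : ℝ) (hs : 0 ≤ s) (ht : 0 ≤ t) :
    μ^[n + 1] (s, t) = τ^[n + 1] (s, t) := by
  have hsθ : 0 < Real.sin θ := Real.sin_pos_of_pos_of_lt_pi hθ₁ (lt_trans hθ₂ (by linarith [Real.pi_pos]))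
  have hcθ : 0 < Real.cos θ := Real.cos_pos_of_mem_Ioo ⟨by linarith, hθ₂⟩
  have hsc : 0 < Real.sin θ * Real.cos θ := mul_pos hsθ hcθ
  have key : ∀ k : ℕ, k ≤ n + 1 → μ^[k] (s, t) = τ^[k] (s, t) := by
    intro k
    induction k with
    | zero => intro _; rfl
    | succ k ih =>
        intro hk
        have hk' : (k : ℝ) ≤ n := by exact_mod_cast Nat.lt_succ_iff.mp hk
        rw [Function.iterate_succ_apply', Function.iterate_succ_apply',
          ih (le_trans (Nat.le_succ k) hk)]
        obtain ⟨c1, c2⟩ := tau_closed p q θ hpq τ hτ s t k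
        set A := (τ^[k] (s, t)).1 with hA
        set B := (τ^[k] (s, t)).2 with hB
        have hpair : τ^[k] (s, t) = (A, B) := rfl
        clear_value A B
        set X := 2 * (k : ℝ) * θ with hXdef
        -- nonnegativity of the needed sines
        have hXnn : 0 ≤ X := by
          rw [hXdef]; positivity
        have hX2 : X + 2 * θ ≤ π := by
          rw [hXdef]
          have : (2 * (k : ℝ) + 2) * θ ≤ (2 * (n : ℝ) + 2) * θ := by
            apply mul_le_mul_of_nonneg_right (by linarith) hθ₁.le
          linarith
        have sX : 0 ≤ Real.sin X :=
          Real.sin_nonneg_of_nonneg_of_le_pi hXnn (by linarith)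
        have sX1 : 0 ≤ Real.sin (X + θ) :=
          Real.sin_nonneg_of_nonneg_of_le_pi (by linarith) (by linarith)
        have sX2 : 0 ≤ Real.sin (X + 2 * θ) :=
          Real.sin_nonneg_of_nonneg_of_le_pi (by linarith) hX2
        -- A ≥ 0
        have hxarg : 2 * (k : ℝ) * θ + θ = X + θ := by rw [hXdef]
        rw [hxarg] at c1
        have hAsc : 0 ≤ A * (Real.sin θ * Real.cos θ) := by
          rw [c1]
          have : 0 ≤ s * Real.sin (X + θ) * Real.cos θ := by positivity
          have : 0 ≤ q * t * Real.sin X / 2 := by positivity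
          linarith [mul_nonneg (mul_nonneg hs sX1) hcθ.le]
        have hAnn : 0 ≤ A := (mul_nonneg_iff_of_pos_right hsc).mp hAsc
        -- p*A + B ≥ 0
        have e1 : Real.sin (X + θ)
            = Real.sin X * Real.cos θ + Real.cos X * Real.sin θ := Real.sin_add X θ
        have e0 : Real.sin (X - θ)
            = Real.sin X * Real.cos θ - Real.cos X * Real.sin θ := Real.sin_sub X θ
        have e2 : Real.sin (X + 2 * θ)
            = Real.sin X * (2 * Real.cos θ ^ 2 - 1)
              + Real.cos X * (2 * Real.sin θ * Real.cos θ) := by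
          rw [Real.sin_add, Real.sin_two_mul, Real.cos_two_mul]
        have c2' : B * (Real.sin θ * Real.cos θ)
            = -(p * s * Real.sin X / 2 + t * Real.sin (X - θ) * Real.cos θ) := c2
        have hWsc : (p * A + B) * (Real.sin θ * Real.cos θ)
            = p * s * Real.sin (X + 2 * θ) / 2
              + t * Real.cos θ * Real.sin (X + θ) := by
          rw [e2, e1]
          have c1' := c1
          rw [e1] at c1'
          rw [e0] at c2'
          linear_combination p * c1' + c2' + (t * Real.sin X / 2) * hpq
        have hWnn' : 0 ≤ (p * A + B) * (Real.sin θ * Real.cos θ) := by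
          rw [hWsc]
          have h1 : 0 ≤ p * s * Real.sin (X + 2 * θ) / 2 := by positivity
          have h2 : 0 ≤ t * Real.cos θ * Real.sin (X + θ) := by positivity
          linarith
        have hWnn : 0 ≤ p * A + B := (mul_nonneg_iff_of_pos_right hsc).mp hWnn'
        -- now μ (A,B) = τ (A,B)
        rw [hpair, hμ, hτ]
        have m1 : max A 0 = A := max_eq_left hAnn
        have m2 : max (B + p * A) 0 = B + p * A := max_eq_left (by linarith)
        rw [m1, m2]
        simp only [Prod.mk.injEq]
        constructor <;> ring
  exact key (n + 1) le_rfl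
end
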